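/- For every scaling factor S > 0, the optimum of the ceiling-scaled graph satisfies C_opt(G)/S ≤ C_opt(G↑S) ≤ C_opt(G)/S + n. -/
import Mathlib


/-- `IsWalk tl hd u v p` : the list of edges `p` forms a walk from `u` to `v`
in the directed multigraph whose edges `e` go from `tl e` to `hd e`. -/
def IsWalk {V E : Type} (tl hd : E → V) : V → V → List E → Prop
  | u, v, [] => u = v
  | u, v, e :: es => tl e = u ∧ IsWalk tl hd (hd e) v es

/-- `IsPath tl hd u v p` : `p` is a walk from `u` to `v` visiting pairwise
distinct vertices. -/
def IsPath {V E : Type} (tl hd : E → V) (u v : V) (p : List E) : Prop :=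
  IsWalk tl hd u v p ∧ (u :: p.map hd).Nodup

/-- Lemma: for every scaling factor `S > 0`, the optimum `CoptS` of the
ceiling-scaled graph satisfies `Copt/S ≤ CoptS ≤ Copt/S + n`. -/
theorem stmt_1 {V E : Type} [Fintype V] [Fintype E]
    (tl hd : E → V) (c r : E → ℝ)
    (hc : ∀ e, 0 ≤ c e) (hr : ∀ e, 0 ≤ r e)
    (hn : 2 ≤ Fintype.card V)
    (s t : V) (hst : s ≠ t) (R : ℝ) (hR : 0 ≤ R)
    -- `Copt` is the minimum cost of a feasible s–t path
    (Copt : ℝ)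
    (hCopt₁ : ∃ p, IsPath tl hd s t p ∧ (p.map r).sum ≤ R ∧ (p.map c).sum = Copt)
    (hCopt₂ : ∀ p, IsPath tl hd s t p → (p.map r).sum ≤ R → Copt ≤ (p.map c).sum)
    (S : ℝ) (hS : 0 < S)
    -- `CoptS` is the minimum ceiling-scaled cost of a feasible s–t path
    (CoptS : ℝ)
    (hCoptS₁ : ∃ p, IsPath tl hd s t p ∧ (p.map r).sum ≤ R ∧
      (p.map fun e => (⌊c e / S⌋ : ℝ) + 1).sum = CoptS)
    (hCoptS₂ : ∀ p, IsPath tl hd s t p → (p.map r).sum ≤ R →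
      CoptS ≤ (p.map fun e => (⌊c e / S⌋ : ℝ) + 1).sum) :
    Copt / S ≤ CoptS ∧ CoptS ≤ Copt / S + Fintype.card V := by
  constructor
  · obtain ⟨p, hp, hpr, hpc⟩ := hCoptS₁
    have h1 : Copt ≤ (p.map c).sum := hCopt₂ p hp hpr
    have h2 : (p.map c).sum / S ≤ (p.map fun e => (⌊c e / S⌋ : ℝ) + 1).sum := by
      have key : ∀ l : List E, (l.map c).sum / S = (l.map fun e => c e / S).sum :=
        fun l => by induction l with
          | nil => simp
          | cons a l ih => simp [add_div, ih]
      rw [key]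
      apply List.sum_le_sum
      intro e _
      have := Int.lt_floor_add_one (c e / S)
      linarith
    calc Copt / S ≤ (p.map c).sum / S := (div_le_div_iff_of_pos_right hS).mpr h1
      _ ≤ CoptS := hpc ▸ h2
  · obtain ⟨p, hp, hpr, hpc⟩ := hCopt₁
    have hlen : (p.length : ℝ) ≤ Fintype.card V := by
      have hnd := hp.2
      have := hnd.length_le_card
      simp at this
      exact_mod_cast Nat.le_of_succ_le this
    have h2 : (p.map fun e => (⌊c e / S⌋ : ℝ) + 1).sum ≤ (p.map c).sum / S + p.length := by
      have key : ∀ l : List E, (l.map c).sum / S = (l.map fun e => c e / S).sum :=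
        fun l => by induction l with
          | nil => simp
          | cons a l ih => simp [add_div, ih]
      rw [key]
      have := List.sum_le_sum (l := p) (f := fun e => (⌊c e / S⌋ : ℝ) + 1)
        (g := fun e => c e / S + 1) (fun e _ => by
          have := Int.floor_le (c e / S); linarith)
      calc (p.map fun e => (⌊c e / S⌋ : ℝ) + 1).sum
          ≤ (p.map fun e => c e / S + 1).sum := this
        _ = (p.map fun e => c e / S).sum + p.length := by
            induction p with
            | nil => simp
            | cons a l ih => simp [ih]; ring
    have h3 := hCoptS₂ p hp hpr
    calc CoptS ≤ (p.map c).sum / S + p.length := le_trans h3 h2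
      _ ≤ Copt / S + Fintype.card V := by rw [hpc]; linarith
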